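/- The shuffle product ⧢ on ℂLF is associative, the horizontal mirror map θ is an involution (θ ∘ θ = id on ℂLF), and θ is an antiautomorphism of the shuffle algebra: θ(f ⧢ g) = θ(g) ⧢ θ(f) for all levelled forests f and g. -/

import Mathlib

/-- The free complex vector space on the set of levelled forests.  A levelled forest
`f = (σ, (c_1,…,c_k))` with `σ ∈ S_n`, `c ⊨₀ n`, is encoded by the list of the `k` blocks
(of sizes `c_1,…,c_k`) of the one-line word of `σ` (letters in `{1,…,n}`). -/
abbrev CLF : Type := (List (List ℕ)) →₀ ℂ

/-- `B` encodes a genuine levelled forest: it is a nonempty list of blocks whose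
concatenation is a permutation word of `{1,…,n}` where `n = ‖f‖` is the number of
generations.  The number of trees is `nt(f) = B.length`. -/
def IsLF (B : List (List ℕ)) : Prop :=
  B ≠ [] ∧ List.Perm B.flatten (List.range' 1 B.flatten.length)

/-- `η ∈ S_N` is an `(a, N-a)`-shuffle: it is strictly increasing on the first `a`
positions and on the remaining positions (zero-based positions). -/
def IsShuffle {N : ℕ} (a : ℕ) (η : Equiv.Perm (Fin N)) : Prop :=
  ∀ i j : Fin N, i < j → ((j : ℕ) < a ∨ a ≤ (i : ℕ)) → η i < η j

instance {N a : ℕ} : DecidablePred (fun η : Equiv.Perm (Fin N) => IsShuffle a η) :=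
  fun η => by unfold IsShuffle; infer_instance

/-- The finite set `Sh(a, N-a)` of `(a, N-a)`-shuffles inside `S_N`. -/
def shuffles (N a : ℕ) : Finset (Equiv.Perm (Fin N)) :=
  Finset.univ.filter (fun η => IsShuffle a η)

/-- The action of `α ∈ S_N` on a (one-based) letter. -/
def relabel {N : ℕ} (α : Equiv.Perm (Fin N)) (ℓ : ℕ) : ℕ :=
  if h : ℓ - 1 < N then (α ⟨ℓ - 1, h⟩ : ℕ) + 1 else ℓ

/-- The left action `α · (σ, c) = (α∘σ, c)` of a permutation on a levelled forest,
realized as relabelling of the letters of the forest word. -/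
def relabelF {N : ℕ} (α : Equiv.Perm (Fin N)) (B : List (List ℕ)) : List (List ℕ) :=
  B.map (List.map (relabel α))

/-- Shift all letters of a forest word by `n` (used for `τ + n`). -/
def shiftF (n : ℕ) (B : List (List ℕ)) : List (List ℕ) :=
  B.map (List.map (· + n))

/-- The block pattern of the shuffle product: the blocks
`(c_1,…,c_{k−1}, c_k + c'_1, c'_2,…,c'_q)`, i.e. the last block of `F` is merged with the
first block of `G`. -/
def mergeBlocks (F G : List (List ℕ)) : List (List ℕ) :=
  F.dropLast ++ (F.getLastD [] ++ G.headD []) :: G.tail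

/-- The shuffle product of two levelled forests `f = (σ,(c_1,…,c_k))`,
`g = (σ',(c'_1,…,c'_q))`:
`f ⧢ g = Σ_{α ∈ Sh(n,m)} (α∘(σ⊗σ'), (c_1,…,c_{k−1}, c_k + c'_1, c'_2,…,c'_q)) ∈ ℂLF`. -/
noncomputable def shuffleMulW (F G : List (List ℕ)) : CLF :=
  ∑ η ∈ shuffles (F.flatten.length + G.flatten.length) F.flatten.length,
    Finsupp.single (relabelF η (mergeBlocks F (shiftF F.flatten.length G))) (1 : ℂ)

/-- The bilinear extension of the shuffle product to `ℂLF`. -/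
noncomputable def mulCLF (x y : CLF) : CLF :=
  x.sum fun F a => y.sum fun G b => (a * b) • shuffleMulW F G

/-- The horizontal mirror `θ(σ,(c_1,…,c_k)) = (σ∘c_n, (c_k,…,c_1))`: on forest words it
reverses the list of blocks and each block. -/
def thetaW (B : List (List ℕ)) : List (List ℕ) :=
  (B.map List.reverse).reverse

/-- The linear extension of `θ` to `ℂLF`. -/
noncomputable def theta : CLF → CLF := Finsupp.mapDomain thetaW



open Equiv Finset

lemma mem_shuffles {N a : ℕ} {η : Equiv.Perm (Fin N)} :
    η ∈ shuffles N a ↔ IsShuffle a η := by simp [shuffles]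

/-- block sum of two permutations. -/
def blockSum {n m N : ℕ} (h : n + m = N) (σ : Perm (Fin n)) (τ : Perm (Fin m)) :
    Perm (Fin N) where
  toFun x := if hx : (x : ℕ) < n then ⟨σ ⟨x, hx⟩, by omega⟩
    else ⟨n + τ ⟨(x : ℕ) - n, by omega⟩, by omega⟩
  invFun x := if hx : (x : ℕ) < n then ⟨σ⁻¹ ⟨x, hx⟩, by omega⟩
    else ⟨n + τ⁻¹ ⟨(x : ℕ) - n, by omega⟩, by omega⟩
  left_inv x := by
    by_cases hx : (x : ℕ) < n
    · simp only [hx, dif_pos]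
      have : ((σ ⟨x, hx⟩ : Fin n) : ℕ) < n := (σ ⟨x, hx⟩).isLt
      simp only [this, dif_pos]
      apply Fin.ext
      simp
    · simp only [hx, dif_neg, not_false_iff]
      have h2 : ¬ (n + (τ ⟨(x : ℕ) - n, by omega⟩ : Fin m) : ℕ) < n := by omega
      simp only [h2, dif_neg, not_false_iff]
      apply Fin.ext
      simp only [Nat.add_sub_cancel_left]
      have : (τ⁻¹ (τ ⟨(x:ℕ)-n, by omega⟩) : ℕ) = (x : ℕ) - n := by
        simp
      simp only [Fin.eta] at this ⊢
      rw [this]; omega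
  right_inv x := by
    by_cases hx : (x : ℕ) < n
    · simp only [hx, dif_pos]
      have : ((σ⁻¹ ⟨x, hx⟩ : Fin n) : ℕ) < n := (σ⁻¹ ⟨x, hx⟩).isLt
      simp only [this, dif_pos]
      apply Fin.ext
      simp
    · simp only [hx, dif_neg, not_false_iff]
      have h2 : ¬ (n + (τ⁻¹ ⟨(x : ℕ) - n, by omega⟩ : Fin m) : ℕ) < n := by omega
      simp only [h2, dif_neg, not_false_iff]
      apply Fin.ext
      simp only [Nat.add_sub_cancel_left]
      have : (τ (τ⁻¹ ⟨(x:ℕ)-n, by omega⟩) : ℕ) = (x : ℕ) - n := by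
        simp
      simp only [Fin.eta] at this ⊢
      rw [this]; omega

lemma blockSum_lt {n m N : ℕ} (h : n + m = N) (σ : Perm (Fin n)) (τ : Perm (Fin m))
    (x : Fin N) (hx : (x : ℕ) < n) :
    (blockSum h σ τ x : ℕ) = σ ⟨x, hx⟩ := by
  simp [blockSum, Equiv.coe_fn_mk, hx]

lemma blockSum_ge {n m N : ℕ} (h : n + m = N) (σ : Perm (Fin n)) (τ : Perm (Fin m))
    (x : Fin N) (hx : n ≤ (x : ℕ)) :
    (blockSum h σ τ x : ℕ) = n + τ ⟨(x : ℕ) - n, by omega⟩ := by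
  have : ¬ (x : ℕ) < n := by omega
  simp [blockSum, Equiv.coe_fn_mk, this]

lemma blockSum_one_right_ge {n m N : ℕ} (h : n + m = N) (σ : Perm (Fin n))
    (x : Fin N) (hx : n ≤ (x : ℕ)) : blockSum h σ 1 x = x := by
  apply Fin.ext
  rw [blockSum_ge h σ 1 x hx]
  simp; omega

lemma blockSum_one_left_lt {n m N : ℕ} (h : n + m = N) (τ : Perm (Fin m))
    (x : Fin N) (hx : (x : ℕ) < n) : blockSum h (1 : Perm (Fin n)) τ x = x := by
  apply Fin.ext
  rw [blockSum_lt h 1 τ x hx]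
  simp
open Equiv Finset


section
variable {N a : ℕ}

lemma card_filter_lt (ha : a ≤ N) :
    (Finset.univ.filter (fun x : Fin N => (x : ℕ) < a)).card = a := by
  have : (Finset.univ.filter (fun x : Fin N => (x : ℕ) < a)) =
      (Finset.univ : Finset (Fin a)).image (Fin.castLE ha) := by
    ext x
    simp only [Finset.mem_filter, Finset.mem_univ, true_and, Finset.mem_image]
    constructor
    · intro hx; exact ⟨⟨x, hx⟩, rfl⟩
    · rintro ⟨y, -, rfl⟩; exact y.isLt
  rw [this, Finset.card_image_of_injective _ (Fin.castLE_injective ha)]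
  simp

lemma image_firstBlock {S : Finset (Fin N)} (γ : Perm (Fin N)) (hS : S.card = a) (ha : a ≤ N)
    (hch : ∀ x : Fin N, (x : ℕ) < a → γ x ∈ S) :
    (Finset.univ.filter (fun x : Fin N => (x : ℕ) < a)).image γ = S := by
  apply Finset.eq_of_subset_of_card_le
  · intro y hy
    simp only [Finset.mem_image, Finset.mem_filter, Finset.mem_univ, true_and] at hy
    obtain ⟨x, hx, rfl⟩ := hy
    exact hch x hx
  · rw [hS, Finset.card_image_of_injective _ γ.injective, card_filter_lt ha]

lemma notmem_of_ge {S : Finset (Fin N)} (γ : Perm (Fin N)) (hS : S.card = a) (ha : a ≤ N)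
    (hch : ∀ x : Fin N, (x : ℕ) < a → γ x ∈ S)
    {x : Fin N} (hx : a ≤ (x : ℕ)) : γ x ∉ S := by
  intro hmem
  rw [← image_firstBlock γ hS ha hch] at hmem
  simp only [Finset.mem_image, Finset.mem_filter, Finset.mem_univ, true_and] at hmem
  obtain ⟨y, hy, hyx⟩ := hmem
  have := γ.injective hyx
  omega

lemma shuffle_unique {β β' : Perm (Fin N)} (hβ : IsShuffle a β)
    (hβ' : IsShuffle a β') (ha : a ≤ N) (S : Finset (Fin N)) (hS : S.card = a)
    (hchar : ∀ x : Fin N, (x : ℕ) < a → β x ∈ S)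
    (hchar' : ∀ x : Fin N, (x : ℕ) < a → β' x ∈ S) : β = β' := by
  have hSc : Sᶜ.card = N - a := by
    rw [Finset.card_compl, hS]; simp
  have key1 : (fun i : Fin a => β ⟨i, lt_of_lt_of_le i.isLt ha⟩) =
      (fun i : Fin a => β' ⟨i, lt_of_lt_of_le i.isLt ha⟩) := by
    rw [Finset.orderEmbOfFin_unique hS (f := fun i : Fin a => β ⟨i, lt_of_lt_of_le i.isLt ha⟩)
        (fun i => hchar _ i.isLt)
        (fun i j hij => hβ _ _ (by simpa using hij) (Or.inl j.isLt)),
      Finset.orderEmbOfFin_unique hS (f := fun i : Fin a => β' ⟨i, lt_of_lt_of_le i.isLt ha⟩)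
        (fun i => hchar' _ i.isLt)
        (fun i j hij => hβ' _ _ (by simpa using hij) (Or.inl j.isLt))]
  have key2 : (fun j : Fin (N - a) => β ⟨a + j, by omega⟩) =
      (fun j : Fin (N - a) => β' ⟨a + j, by omega⟩) := by
    rw [Finset.orderEmbOfFin_unique hSc (f := fun j : Fin (N - a) => β ⟨a + j, by omega⟩)
        (fun j => Finset.mem_compl.mpr (notmem_of_ge β hS ha hchar (by simp)))
        (fun i j hij => hβ _ _ (by simpa using hij) (Or.inr (by simp))),
      Finset.orderEmbOfFin_unique hSc (f := fun j : Fin (N - a) => β' ⟨a + j, by omega⟩)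
        (fun j => Finset.mem_compl.mpr (notmem_of_ge β' hS ha hchar' (by simp)))
        (fun i j hij => hβ' _ _ (by simpa using hij) (Or.inr (by simp)))]
  apply Equiv.ext
  intro x
  by_cases hx : (x : ℕ) < a
  · have := congrFun key1 ⟨x, hx⟩
    simpa using this
  · have hj : (x : ℕ) - a < N - a := by omega
    have := congrFun key2 ⟨(x : ℕ) - a, hj⟩
    simp only at this
    have hx' : (⟨a + ((x : ℕ) - a), by omega⟩ : Fin N) = x := by
      apply Fin.ext; simp; omega
    rwa [hx'] at this

/-- existence: given a set S of size a, there is a shuffle whose first block maps onto S -/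
lemma shuffle_exists (ha : a ≤ N) (S : Finset (Fin N)) (hS : S.card = a) :
    ∃ β : Perm (Fin N), IsShuffle a β ∧ (∀ x : Fin N, (x : ℕ) < a → β x ∈ S) := by
  have hSc : Sᶜ.card = N - a := by rw [Finset.card_compl, hS]; simp
  set f : Fin a ↪o Fin N := S.orderEmbOfFin hS with hf
  set g : Fin (N - a) ↪o Fin N := Sᶜ.orderEmbOfFin hSc with hg
  set F : Fin N → Fin N := fun x =>
    if hx : (x : ℕ) < a then f ⟨x, hx⟩ else g ⟨(x : ℕ) - a, by omega⟩ with hF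
  have hFinj : Function.Injective F := by
    intro x y hxy
    simp only [hF] at hxy
    by_cases hx : (x : ℕ) < a <;> by_cases hy : (y : ℕ) < a <;>
      simp only [hx, hy, dif_pos, dif_neg, not_false_iff] at hxy
    · apply Fin.ext
      have := f.injective hxy
      simpa using congrArg Fin.val this
    · exfalso
      have h1 : f ⟨x, hx⟩ ∈ S := Finset.orderEmbOfFin_mem S hS _
      have h2 : g ⟨(y:ℕ) - a, by omega⟩ ∈ Sᶜ := Finset.orderEmbOfFin_mem Sᶜ hSc _
      rw [hxy] at h1
      exact (Finset.mem_compl.mp h2) h1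
    · exfalso
      have h1 : f ⟨y, hy⟩ ∈ S := Finset.orderEmbOfFin_mem S hS _
      have h2 : g ⟨(x:ℕ) - a, by omega⟩ ∈ Sᶜ := Finset.orderEmbOfFin_mem Sᶜ hSc _
      rw [hxy] at h2
      exact (Finset.mem_compl.mp h2) h1
    · have := g.injective hxy
      have := congrArg Fin.val this
      simp only at this
      apply Fin.ext; omega
  have hFbij : Function.Bijective F := Finite.injective_iff_bijective.mp hFinj
  refine ⟨Equiv.ofBijective F hFbij, ?_, ?_⟩
  · intro i j hij hblk
    have hFi : (Equiv.ofBijective F hFbij) i = F i := rfl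
    have hFj : (Equiv.ofBijective F hFbij) j = F j := rfl
    rw [hFi, hFj, hF]
    rcases hblk with hj | hi
    · have hi' : (i : ℕ) < a := lt_trans hij hj
      simp only [hi', hj, dif_pos]
      exact f.strictMono (by simpa using hij)
    · have hj' : ¬ (j : ℕ) < a := by omega
      have hi'' : ¬ (i : ℕ) < a := by omega
      simp only [hj', hi'', dif_neg, not_false_iff]
      apply g.strictMono
      simp only [Fin.mk_lt_mk]
      omega
  · intro x hx
    have : (Equiv.ofBijective F hFbij) x = F x := rfl
    rw [this, hF]
    simp only [hx, dif_pos]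
    exact Finset.orderEmbOfFin_mem S hS _
end
open Equiv Finset

section
variable {N : ℕ}

lemma perm_fix_high_maps (σ : Perm (Fin N)) (K : ℕ)
    (hfix : ∀ x : Fin N, K ≤ (x : ℕ) → σ x = x) :
    ∀ x : Fin N, (x : ℕ) < K → (σ x : ℕ) < K := by
  intro x hx
  by_contra hge
  push_neg at hge
  have h1 : σ (σ x) = σ x := hfix _ hge
  have := σ.injective h1
  rw [this] at hge
  omega

lemma perm_fix_low_maps (σ : Perm (Fin N)) (K : ℕ)
    (hfix : ∀ x : Fin N, (x : ℕ) < K → σ x = x) :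
    ∀ x : Fin N, K ≤ (x : ℕ) → K ≤ (σ x : ℕ) := by
  intro x hx
  by_contra hlt
  push_neg at hlt
  have h1 : σ (σ x) = σ x := hfix _ hlt
  have := σ.injective h1
  rw [this] at hlt
  omega

lemma perm_inv_fix_high (σ : Perm (Fin N)) (K : ℕ)
    (hfix : ∀ x : Fin N, K ≤ (x : ℕ) → σ x = x) :
    ∀ x : Fin N, K ≤ (x : ℕ) → σ⁻¹ x = x := by
  intro x hx
  have := hfix x hx
  conv_lhs => rw [← this]
  simp

lemma perm_inv_fix_low (σ : Perm (Fin N)) (K : ℕ)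
    (hfix : ∀ x : Fin N, (x : ℕ) < K → σ x = x) :
    ∀ x : Fin N, (x : ℕ) < K → σ⁻¹ x = x := by
  intro x hx
  have := hfix x hx
  conv_lhs => rw [← this]
  simp

/-- restriction of a permutation fixing `[K,N)` pointwise to `Fin K`. -/
def restrictLow {K : ℕ} (hK : K ≤ N) (σ : Perm (Fin N))
    (hfix : ∀ x : Fin N, K ≤ (x : ℕ) → σ x = x) : Perm (Fin K) where
  toFun i := ⟨σ ⟨i, by omega⟩, perm_fix_high_maps σ K hfix _ i.isLt⟩
  invFun i := ⟨σ⁻¹ ⟨i, by omega⟩, by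
    apply perm_fix_high_maps σ⁻¹ K (perm_inv_fix_high σ K hfix) _ i.isLt⟩
  left_inv i := by apply Fin.ext; simp
  right_inv i := by apply Fin.ext; simp

/-- restriction of a permutation fixing `[0,n)` pointwise to the high block. -/
def restrictHigh {n K : ℕ} (h : n + K = N) (σ : Perm (Fin N))
    (hfix : ∀ x : Fin N, (x : ℕ) < n → σ x = x) : Perm (Fin K) where
  toFun j := ⟨(σ ⟨n + j, by omega⟩ : ℕ) - n, by
    have h1 := perm_fix_low_maps σ n hfix ⟨n + j, by omega⟩ (by simp)
    have h2 := (σ ⟨n + j, by omega⟩).isLt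
    omega⟩
  invFun j := ⟨(σ⁻¹ ⟨n + j, by omega⟩ : ℕ) - n, by
    have h1 := perm_fix_low_maps σ⁻¹ n (perm_inv_fix_low σ n hfix) ⟨n + j, by omega⟩ (by simp)
    have h2 := (σ⁻¹ ⟨n + j, by omega⟩).isLt
    omega⟩
  left_inv j := by
    apply Fin.ext
    simp only
    have h1 := perm_fix_low_maps σ n hfix ⟨n + j, by omega⟩ (by simp)
    have h3 : (⟨n + ((σ ⟨n + j, by omega⟩ : ℕ) - n), by
        have := (σ ⟨n + (j:ℕ), by omega⟩).isLt; omega⟩ : Fin N) = σ ⟨n + j, by omega⟩ := by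
      apply Fin.ext; simp; omega
    rw [h3]
    simp
  right_inv j := by
    apply Fin.ext
    simp only
    have h1 := perm_fix_low_maps σ⁻¹ n (perm_inv_fix_low σ n hfix) ⟨n + j, by omega⟩ (by simp)
    have h3 : (⟨n + ((σ⁻¹ ⟨n + j, by omega⟩ : ℕ) - n), by
        have := (σ⁻¹ ⟨n + (j:ℕ), by omega⟩).isLt; omega⟩ : Fin N) = σ⁻¹ ⟨n + j, by omega⟩ := by
      apply Fin.ext; show n + _ = _; omega
    rw [h3]
    simp

end
open Equiv Finset

section
variable {N : ℕ}

lemma blockSum_restrictLow {K p : ℕ} (h : K + p = N) (σ : Perm (Fin N))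
    (hfix : ∀ x : Fin N, K ≤ (x : ℕ) → σ x = x) :
    blockSum h (restrictLow (by omega) σ hfix) (1 : Perm (Fin p)) = σ := by
  apply Equiv.ext
  intro x
  by_cases hx : (x : ℕ) < K
  · apply Fin.ext
    rw [blockSum_lt h _ _ x hx]
    rfl
  · rw [blockSum_one_right_ge h _ x (by omega), hfix x (by omega)]

lemma blockSum_restrictHigh {n K : ℕ} (h : n + K = N) (σ : Perm (Fin N))
    (hfix : ∀ x : Fin N, (x : ℕ) < n → σ x = x) :
    blockSum h (1 : Perm (Fin n)) (restrictHigh h σ hfix) = σ := by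
  apply Equiv.ext
  intro x
  by_cases hx : (x : ℕ) < n
  · rw [blockSum_one_left_lt h _ x hx, hfix x hx]
  · apply Fin.ext
    rw [blockSum_ge h _ _ x (by omega)]
    have h2 : (⟨n + ((x:ℕ) - n), by omega⟩ : Fin N) = x := by apply Fin.ext; simp; omega
    have h1 := perm_fix_low_maps σ n hfix x (by omega)
    show n + ((σ ⟨n + ((x:ℕ) - n), by omega⟩ : ℕ) - n) = (σ x : ℕ)
    rw [h2]
    omega

lemma blockSum_lt_iff {n m : ℕ} (h : n + m = N) (σ : Perm (Fin n)) (τ : Perm (Fin m))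
    (x : Fin N) : (blockSum h σ τ x : ℕ) < n ↔ (x : ℕ) < n := by
  constructor
  · intro hlt
    by_contra hge
    rw [blockSum_ge h σ τ x (by omega)] at hlt
    omega
  · intro hx
    rw [blockSum_lt h σ τ x hx]
    exact (σ ⟨x, hx⟩).isLt

lemma shuffle_reflect {a : ℕ} {β : Perm (Fin N)} (hβ : IsShuffle a β)
    {x y : Fin N} (hxy : β x < β y) (hblk : ((x : ℕ) < a ↔ (y : ℕ) < a)) : x < y := by
  rcases lt_trichotomy x y with h | h | h
  · exact h
  · rw [h] at hxy; exact absurd hxy (lt_irrefl _)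
  · exfalso
    have : β y < β x := by
      apply hβ _ _ h
      by_cases hy : (y : ℕ) < a
      · exact Or.inl (hblk.mpr hy)
      · exact Or.inr (by omega)
    exact absurd hxy (not_lt.mpr (le_of_lt this))

def IsShuffle3 {N : ℕ} (n m : ℕ) (α : Perm (Fin N)) : Prop :=
  ∀ i j : Fin N, i < j →
    ((j : ℕ) < n ∨ (n ≤ (i : ℕ) ∧ (j : ℕ) < n + m) ∨ n + m ≤ (i : ℕ)) → α i < α j

instance {N n m : ℕ} : DecidablePred (fun α : Perm (Fin N) => IsShuffle3 n m α) :=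
  fun _ => by unfold IsShuffle3; infer_instance

def sh3 (N n m : ℕ) : Finset (Perm (Fin N)) :=
  Finset.univ.filter (fun α => IsShuffle3 n m α)

end

section
variable {N : ℕ}

lemma blockSum_left_injective {n m : ℕ} (h : n + m = N) (σ σ' : Perm (Fin n))
    (τ : Perm (Fin m)) (heq : blockSum h σ τ = blockSum h σ' τ) : σ = σ' := by
  apply Equiv.ext
  intro i
  apply Fin.ext
  have h1 := blockSum_lt h σ τ ⟨(i : ℕ), by omega⟩ (by simpa using i.isLt)
  have h2 := blockSum_lt h σ' τ ⟨(i : ℕ), by omega⟩ (by simpa using i.isLt)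
  rw [heq, h2] at h1
  simpa using h1.symm

lemma blockSum_right_injective {n m : ℕ} (h : n + m = N) (σ : Perm (Fin n))
    (τ τ' : Perm (Fin m)) (heq : blockSum h σ τ = blockSum h σ τ') : τ = τ' := by
  apply Equiv.ext
  intro i
  apply Fin.ext
  have h1 := blockSum_ge h σ τ ⟨n + (i : ℕ), by omega⟩ (by simp)
  have h2 := blockSum_ge h σ τ' ⟨n + (i : ℕ), by omega⟩ (by simp)
  rw [heq, h2] at h1
  simp only [Nat.add_sub_cancel_left] at h1
  have := Nat.add_left_cancel h1
  simpa using this.symm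
end
open Equiv Finset

set_option maxHeartbeats 1000000 in
theorem sumA {n m p : ℕ} {M : Type} [AddCommMonoid M] (f : Perm (Fin (n + m + p)) → M) :
    ∑ η ∈ shuffles (n + m) n, ∑ β ∈ shuffles (n + m + p) (n + m),
      f (β * blockSum rfl η (1 : Perm (Fin p))) = ∑ α ∈ sh3 (n + m + p) n m, f α := by
  rw [← Finset.sum_product']
  apply Finset.sum_bij
    (i := fun (q : Perm (Fin (n+m)) × Perm (Fin (n+m+p))) _ =>
      q.2 * blockSum rfl q.1 (1 : Perm (Fin p)))
  · -- maps into sh3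
    rintro ⟨η, β⟩ hq
    rw [Finset.mem_product, mem_shuffles, mem_shuffles] at hq
    obtain ⟨hη, hβ⟩ := hq
    simp only [sh3, Finset.mem_filter, Finset.mem_univ, true_and]
    intro i j hij hcase
    show β (blockSum rfl η 1 i) < β (blockSum rfl η 1 j)
    rcases hcase with hj | ⟨hi, hj⟩ | hi
    · -- j < n
      have hi' : (i : ℕ) < n := lt_of_lt_of_le (Fin.lt_def.mp hij) (le_of_lt hj)
      have hbi : (blockSum rfl η (1 : Perm (Fin p)) i : ℕ) = η ⟨i, by omega⟩ :=
        blockSum_lt rfl η 1 i (by omega)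
      have hbj : (blockSum rfl η (1 : Perm (Fin p)) j : ℕ) = η ⟨j, by omega⟩ :=
        blockSum_lt rfl η 1 j (by omega)
      have hlt : η ⟨(i:ℕ), by omega⟩ < η ⟨(j:ℕ), by omega⟩ :=
        hη _ _ (Fin.mk_lt_mk.mpr (Fin.lt_def.mp hij)) (Or.inl hj)
      apply hβ
      · rw [Fin.lt_def, hbi, hbj]; exact hlt
      · left; rw [hbj]; exact (η ⟨(j:ℕ), by omega⟩).isLt
    · -- n ≤ i, j < n+m
      have hbi : (blockSum rfl η (1 : Perm (Fin p)) i : ℕ) = η ⟨i, by omega⟩ :=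
        blockSum_lt rfl η 1 i (by omega)
      have hbj : (blockSum rfl η (1 : Perm (Fin p)) j : ℕ) = η ⟨j, by omega⟩ :=
        blockSum_lt rfl η 1 j (by omega)
      have hlt : η ⟨(i:ℕ), by omega⟩ < η ⟨(j:ℕ), by omega⟩ :=
        hη _ _ (Fin.mk_lt_mk.mpr (Fin.lt_def.mp hij)) (Or.inr hi)
      apply hβ
      · rw [Fin.lt_def, hbi, hbj]; exact hlt
      · left; rw [hbj]; exact (η ⟨(j:ℕ), by omega⟩).isLt
    · -- n+m ≤ i
      have hj' : n + m ≤ (j : ℕ) := le_trans hi (le_of_lt (Fin.lt_def.mp hij))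
      rw [blockSum_one_right_ge rfl η i hi, blockSum_one_right_ge rfl η j hj']
      exact hβ _ _ hij (Or.inr hi)
  · -- injective
    rintro ⟨η, β⟩ hq ⟨η', β'⟩ hq' heq
    rw [Finset.mem_product, mem_shuffles, mem_shuffles] at hq hq'
    obtain ⟨hη, hβ⟩ := hq
    obtain ⟨hη', hβ'⟩ := hq'
    set S : Finset (Fin (n+m+p)) :=
      (Finset.univ.filter (fun x : Fin (n+m+p) => (x : ℕ) < n + m)).image β with hSdef
    have hS : S.card = n + m := by
      rw [hSdef, Finset.card_image_of_injective _ β.injective, card_filter_lt (by omega)]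
    have hchar : ∀ x : Fin (n+m+p), (x : ℕ) < n + m → β x ∈ S := by
      intro x hx
      rw [hSdef]
      exact Finset.mem_image_of_mem _ (by simp [hx])
    have hchar' : ∀ x : Fin (n+m+p), (x : ℕ) < n + m → β' x ∈ S := by
      intro x hx
      set y := (blockSum rfl η' (1 : Perm (Fin p)))⁻¹ x with hy
      have hyx : blockSum rfl η' (1 : Perm (Fin p)) y = x := by rw [hy]; simp
      have hylt : (y : ℕ) < n + m := by
        rw [← blockSum_lt_iff rfl η' (1 : Perm (Fin p)) y, hyx]; exact hx
      have h1 : β' x = (β' * blockSum rfl η' (1 : Perm (Fin p))) y := by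
        simp [Perm.mul_apply, hyx]
      rw [h1, ← heq]
      have h2 : (β * blockSum rfl η (1 : Perm (Fin p))) y =
          β (blockSum rfl η (1 : Perm (Fin p)) y) := rfl
      rw [h2]
      apply hchar
      rw [blockSum_lt_iff]
      exact hylt
    have hββ' : β = β' := shuffle_unique hβ hβ' (by omega) S hS hchar hchar'
    subst hββ'
    have hbs : blockSum rfl η (1 : Perm (Fin p)) = blockSum rfl η' (1 : Perm (Fin p)) :=
      mul_left_cancel heq
    rw [blockSum_left_injective rfl η η' 1 hbs]
  · -- surjective
    intro α hα
    rw [sh3, Finset.mem_filter] at hα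
    obtain ⟨-, hα3⟩ := hα
    set S : Finset (Fin (n+m+p)) :=
      (Finset.univ.filter (fun x : Fin (n+m+p) => (x : ℕ) < n + m)).image α with hSdef
    have hS : S.card = n + m := by
      rw [hSdef, Finset.card_image_of_injective _ α.injective, card_filter_lt (by omega)]
    have hαchar : ∀ x : Fin (n+m+p), (x : ℕ) < n + m → α x ∈ S := by
      intro x hx
      exact Finset.mem_image_of_mem _ (by simp [hx])
    obtain ⟨β, hβsh, hβchar⟩ := shuffle_exists (by omega) S hS
    have hSc : Sᶜ.card = p := by rw [Finset.card_compl, hS]; simp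
    -- high block of α and β agree
    have hhigh : ∀ x : Fin (n+m+p), n + m ≤ (x : ℕ) → α x = β x := by
      have e1 : (fun j : Fin p => α ⟨n + m + j, by omega⟩) =
          (fun j : Fin p => β ⟨n + m + j, by omega⟩) := by
        rw [Finset.orderEmbOfFin_unique hSc
            (f := fun j : Fin p => α ⟨n + m + j, by omega⟩)
            (fun j => Finset.mem_compl.mpr (notmem_of_ge α hS (by omega) hαchar (by simp)))
            (fun i j hij => hα3 _ _ (Fin.mk_lt_mk.mpr (by have := Fin.lt_def.mp hij; omega)) (Or.inr (Or.inr (by simp)))),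
          Finset.orderEmbOfFin_unique hSc
            (f := fun j : Fin p => β ⟨n + m + j, by omega⟩)
            (fun j => Finset.mem_compl.mpr (notmem_of_ge β hS (by omega) hβchar (by simp)))
            (fun i j hij => hβsh _ _ (Fin.mk_lt_mk.mpr (by have := Fin.lt_def.mp hij; omega)) (Or.inr (by simp)))]
      intro x hx
      have := congrFun e1 ⟨(x : ℕ) - (n + m), by omega⟩
      simp only at this
      have hx' : (⟨n + m + ((x : ℕ) - (n + m)), by omega⟩ : Fin (n+m+p)) = x := by
        apply Fin.ext; simp; omega
      rwa [hx'] at this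
    set σ := β⁻¹ * α with hσ
    have hfix : ∀ x : Fin (n+m+p), n + m ≤ (x : ℕ) → σ x = x := by
      intro x hx
      rw [hσ]
      show β⁻¹ (α x) = x
      rw [hhigh x hx]
      simp
    set η := restrictLow (K := n + m) (by omega) σ hfix with hηdef
    have hbsσ : blockSum rfl η (1 : Perm (Fin p)) = σ := blockSum_restrictLow rfl σ hfix
    have hu : ∀ x : Fin (n+m+p), (x : ℕ) < n + m → (σ x : ℕ) < n + m :=
      perm_fix_high_maps σ (n+m) hfix
    -- η is a shuffle
    have hηsh : IsShuffle n η := by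
      intro i j hij hcase
      show (⟨σ ⟨i, by omega⟩, _⟩ : Fin (n+m)) < ⟨σ ⟨j, by omega⟩, _⟩
      rw [Fin.lt_def]
      simp only
      set i' : Fin (n+m+p) := ⟨(i:ℕ), by omega⟩
      set j' : Fin (n+m+p) := ⟨(j:ℕ), by omega⟩
      have hαij : α i' < α j' := by
        apply hα3
        · rw [Fin.lt_def]; exact hij
        · rcases hcase with hj | hi
          · exact Or.inl hj
          · exact Or.inr (Or.inl ⟨hi, by exact j.isLt⟩)
      have hiS : α i' ∈ S := hαchar i' (by exact i.isLt)
      have hjS : α j' ∈ S := hαchar j' (by exact j.isLt)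
      have hinvlt : ∀ y : Fin (n+m+p), y ∈ S → (β⁻¹ y : ℕ) < n + m := by
        intro y hy
        by_contra hge
        have := notmem_of_ge β hS (by omega) hβchar (x := β⁻¹ y) (by omega)
        simp at this
        exact this hy
      have : β⁻¹ (α i') < β⁻¹ (α j') := by
        apply shuffle_reflect hβsh (by simpa using hαij)
        constructor
        · intro _; exact hinvlt _ hjS
        · intro _; exact hinvlt _ hiS
      exact this
    refine ⟨(η, β), ?_, ?_⟩
    · rw [Finset.mem_product, mem_shuffles, mem_shuffles]
      exact ⟨hηsh, hβsh⟩
    · show β * blockSum rfl η (1 : Perm (Fin p)) = α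
      rw [hbsσ, hσ]
      group
  · rintro ⟨η, β⟩ -
    rfl
open Equiv Finset

set_option maxHeartbeats 1000000 in
theorem sumB {n m p : ℕ} {M : Type} [AddCommMonoid M] (f : Perm (Fin (n + m + p)) → M) :
    ∑ γ ∈ shuffles (m + p) m, ∑ δ ∈ shuffles (n + m + p) n,
      f (δ * blockSum (Nat.add_assoc n m p).symm (1 : Perm (Fin n)) γ) =
      ∑ α ∈ sh3 (n + m + p) n m, f α := by
  have hA : n + (m + p) = n + m + p := (Nat.add_assoc n m p).symm
  rw [← Finset.sum_product']
  apply Finset.sum_bij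
    (i := fun (q : Perm (Fin (m+p)) × Perm (Fin (n+m+p))) _ =>
      q.2 * blockSum (Nat.add_assoc n m p).symm (1 : Perm (Fin n)) q.1)
  · -- maps into sh3
    rintro ⟨γ, δ⟩ hq
    rw [Finset.mem_product, mem_shuffles, mem_shuffles] at hq
    obtain ⟨hγ, hδ⟩ := hq
    simp only [sh3, Finset.mem_filter, Finset.mem_univ, true_and]
    intro i j hij hcase
    show δ (blockSum hA 1 γ i) < δ (blockSum hA 1 γ j)
    rcases hcase with hj | ⟨hi, hj⟩ | hi
    · -- j < n : bsγ fixes both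
      have hi' : (i : ℕ) < n := lt_of_lt_of_le (Fin.lt_def.mp hij) (le_of_lt hj)
      rw [blockSum_one_left_lt hA γ i hi', blockSum_one_left_lt hA γ j hj]
      exact hδ _ _ hij (Or.inl hj)
    · -- n ≤ i, j < n + m
      have hbi : (blockSum hA (1 : Perm (Fin n)) γ i : ℕ) = n + γ ⟨(i:ℕ) - n, by omega⟩ :=
        blockSum_ge hA 1 γ i hi
      have hbj : (blockSum hA (1 : Perm (Fin n)) γ j : ℕ) = n + γ ⟨(j:ℕ) - n, by omega⟩ :=
        blockSum_ge hA 1 γ j (by omega)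
      have hlt : γ ⟨(i:ℕ) - n, by omega⟩ < γ ⟨(j:ℕ) - n, by omega⟩ := by
        apply hγ
        · rw [Fin.mk_lt_mk]
          have := Fin.lt_def.mp hij
          omega
        · left
          show (j:ℕ) - n < m
          omega
      apply hδ
      · rw [Fin.lt_def, hbi, hbj]
        exact Nat.add_lt_add_left hlt n
      · right; rw [hbi]; omega
    · -- n + m ≤ i
      have hbi : (blockSum hA (1 : Perm (Fin n)) γ i : ℕ) = n + γ ⟨(i:ℕ) - n, by omega⟩ :=
        blockSum_ge hA 1 γ i (by omega)
      have hbj : (blockSum hA (1 : Perm (Fin n)) γ j : ℕ) = n + γ ⟨(j:ℕ) - n, by omega⟩ :=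
        blockSum_ge hA 1 γ j (by omega)
      have hlt : γ ⟨(i:ℕ) - n, by omega⟩ < γ ⟨(j:ℕ) - n, by omega⟩ := by
        apply hγ
        · rw [Fin.mk_lt_mk]
          have := Fin.lt_def.mp hij
          omega
        · right
          show m ≤ (i:ℕ) - n
          omega
      apply hδ
      · rw [Fin.lt_def, hbi, hbj]
        exact Nat.add_lt_add_left hlt n
      · right; rw [hbi]; omega
  · -- injective
    rintro ⟨γ, δ⟩ hq ⟨γ', δ'⟩ hq' heq
    rw [Finset.mem_product, mem_shuffles, mem_shuffles] at hq hq'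
    obtain ⟨hγ, hδ⟩ := hq
    obtain ⟨hγ', hδ'⟩ := hq'
    set S : Finset (Fin (n+m+p)) :=
      (Finset.univ.filter (fun x : Fin (n+m+p) => (x : ℕ) < n)).image δ with hSdef
    have hS : S.card = n := by
      rw [hSdef, Finset.card_image_of_injective _ δ.injective, card_filter_lt (by omega)]
    have hchar : ∀ x : Fin (n+m+p), (x : ℕ) < n → δ x ∈ S := by
      intro x hx
      exact Finset.mem_image_of_mem _ (by simp [hx])
    have hchar' : ∀ x : Fin (n+m+p), (x : ℕ) < n → δ' x ∈ S := by
      intro x hx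
      have h1 : δ' x = (δ' * blockSum (Nat.add_assoc n m p).symm (1 : Perm (Fin n)) γ') x := by
        show δ' x = δ' (blockSum hA 1 γ' x)
        rw [blockSum_one_left_lt hA γ' x hx]
      rw [h1, ← heq]
      show δ (blockSum hA 1 γ x) ∈ S
      rw [blockSum_one_left_lt hA γ x hx]
      exact hchar x hx
    have hδδ' : δ = δ' := shuffle_unique hδ hδ' (by omega) S hS hchar hchar'
    subst hδδ'
    have hbs := mul_left_cancel heq
    rw [blockSum_right_injective (Nat.add_assoc n m p).symm 1 γ γ' hbs]
  · -- surjective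
    intro α hα
    rw [sh3, Finset.mem_filter] at hα
    obtain ⟨-, hα3⟩ := hα
    set S : Finset (Fin (n+m+p)) :=
      (Finset.univ.filter (fun x : Fin (n+m+p) => (x : ℕ) < n)).image α with hSdef
    have hS : S.card = n := by
      rw [hSdef, Finset.card_image_of_injective _ α.injective, card_filter_lt (by omega)]
    have hαchar : ∀ x : Fin (n+m+p), (x : ℕ) < n → α x ∈ S := by
      intro x hx
      exact Finset.mem_image_of_mem _ (by simp [hx])
    obtain ⟨δ, hδsh, hδchar⟩ := shuffle_exists (by omega) S hS
    -- low block of α and δ agree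
    have hlow : ∀ x : Fin (n+m+p), (x : ℕ) < n → α x = δ x := by
      have e1 : (fun i : Fin n => α ⟨(i:ℕ), by omega⟩) =
          (fun i : Fin n => δ ⟨(i:ℕ), by omega⟩) := by
        rw [Finset.orderEmbOfFin_unique hS
            (f := fun i : Fin n => α ⟨(i:ℕ), by omega⟩)
            (fun i => hαchar _ i.isLt)
            (fun i j hij => hα3 _ _ (Fin.mk_lt_mk.mpr (Fin.lt_def.mp hij)) (Or.inl j.isLt)),
          Finset.orderEmbOfFin_unique hS
            (f := fun i : Fin n => δ ⟨(i:ℕ), by omega⟩)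
            (fun i => hδchar _ i.isLt)
            (fun i j hij => hδsh _ _ (Fin.mk_lt_mk.mpr (Fin.lt_def.mp hij)) (Or.inl j.isLt))]
      intro x hx
      have := congrFun e1 ⟨(x : ℕ), hx⟩
      simpa using this
    set σ := δ⁻¹ * α with hσ
    have hfix : ∀ x : Fin (n+m+p), (x : ℕ) < n → σ x = x := by
      intro x hx
      show δ⁻¹ (α x) = x
      rw [hlow x hx]
      simp
    set γ := restrictHigh hA σ hfix with hγdef
    have hbsσ : blockSum hA (1 : Perm (Fin n)) γ = σ := blockSum_restrictHigh hA σ hfix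
    have hinvge : ∀ y : Fin (n+m+p), y ∉ S → n ≤ (δ⁻¹ y : ℕ) := by
      intro y hy
      by_contra hlt
      push_neg at hlt
      have := hδchar (δ⁻¹ y) hlt
      simp at this
      exact hy this
    -- γ is a shuffle
    have hγsh : IsShuffle m γ := by
      intro i j hij hcase
      show (⟨(σ ⟨n + i, by omega⟩ : ℕ) - n, _⟩ : Fin (m+p)) < ⟨(σ ⟨n + j, by omega⟩ : ℕ) - n, _⟩
      rw [Fin.lt_def]
      simp only
      set i' : Fin (n+m+p) := ⟨n + (i:ℕ), by omega⟩
      set j' : Fin (n+m+p) := ⟨n + (j:ℕ), by omega⟩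
      have hαij : α i' < α j' := by
        apply hα3
        · rw [Fin.lt_def]
          show n + (i:ℕ) < n + (j:ℕ)
          have := Fin.lt_def.mp hij
          omega
        · rcases hcase with hj | hi
          · refine Or.inr (Or.inl ⟨by show n ≤ n + (i:ℕ); omega, ?_⟩)
            show n + (j:ℕ) < n + m
            omega
          · refine Or.inr (Or.inr ?_)
            show n + m ≤ n + (i:ℕ)
            omega
      have hiS : α i' ∉ S := notmem_of_ge α hS (by omega) hαchar (by show n ≤ n + (i:ℕ); omega)
      have hjS : α j' ∉ S := notmem_of_ge α hS (by omega) hαchar (by show n ≤ n + (j:ℕ); omega)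
      have hmono : δ⁻¹ (α i') < δ⁻¹ (α j') := by
        apply shuffle_reflect hδsh (by simpa using hαij)
        constructor
        · intro hlt
          exfalso
          exact absurd (hδchar _ hlt) (by simpa using hiS)
        · intro hlt
          exfalso
          exact absurd (hδchar _ hlt) (by simpa using hjS)
      have hgei : n ≤ (δ⁻¹ (α i') : ℕ) := hinvge _ hiS
      have hgej : n ≤ (δ⁻¹ (α j') : ℕ) := hinvge _ hjS
      have hval : (δ⁻¹ (α i') : ℕ) < (δ⁻¹ (α j') : ℕ) := hmono
      show (σ i' : ℕ) - n < (σ j' : ℕ) - n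
      have hi'' : (σ i' : ℕ) = (δ⁻¹ (α i') : ℕ) := rfl
      have hj'' : (σ j' : ℕ) = (δ⁻¹ (α j') : ℕ) := rfl
      omega
    refine ⟨(γ, δ), ?_, ?_⟩
    · rw [Finset.mem_product, mem_shuffles, mem_shuffles]
      exact ⟨hγsh, hδsh⟩
    · show δ * blockSum (Nat.add_assoc n m p).symm (1 : Perm (Fin n)) γ = α
      rw [show blockSum (Nat.add_assoc n m p).symm (1 : Perm (Fin n)) γ = σ from hbsσ, hσ]
      group
  · rintro ⟨γ, δ⟩ -
    rfl
open Equiv Finset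

section words

lemma relabel_relabel {N : ℕ} (α β : Perm (Fin N)) (ℓ : ℕ) :
    relabel α (relabel β ℓ) = relabel (α * β) ℓ := by
  unfold relabel
  by_cases h : ℓ - 1 < N
  · rw [dif_pos h]
    have h2 : (β ⟨ℓ - 1, h⟩ : ℕ) + 1 - 1 < N := by
      simpa using (β ⟨ℓ - 1, h⟩).isLt
    rw [dif_pos h2, dif_pos h]
    have h3 : (⟨(β ⟨ℓ - 1, h⟩ : ℕ) + 1 - 1, h2⟩ : Fin N) = β ⟨ℓ - 1, h⟩ := by
      apply Fin.ext; simp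
    rw [h3]
    rfl
  · simp only [dif_neg h]

lemma relabelF_relabelF {N : ℕ} (α β : Perm (Fin N)) (B : List (List ℕ)) :
    relabelF α (relabelF β B) = relabelF (α * β) B := by
  unfold relabelF
  rw [List.map_map]
  apply List.map_congr_left
  intro b _
  show List.map (relabel α) (List.map (relabel β) b) = _
  rw [List.map_map]
  apply List.map_congr_left
  intro ℓ _
  exact relabel_relabel α β ℓ

lemma mapF_congr {f g : ℕ → ℕ} {B : List (List ℕ)}
    (h : ∀ ℓ ∈ B.flatten, f ℓ = g ℓ) :
    B.map (List.map f) = B.map (List.map g) := by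
  apply List.map_congr_left
  intro b hb
  apply List.map_congr_left
  intro ℓ hℓ
  exact h ℓ (List.mem_flatten.mpr ⟨b, hb, hℓ⟩)

lemma flatten_mapF (f : ℕ → ℕ) (B : List (List ℕ)) :
    (B.map (List.map f)).flatten = B.flatten.map f := by rw [List.map_flatten]

lemma relabelF_flatten {N : ℕ} (α : Perm (Fin N)) (B : List (List ℕ)) :
    (relabelF α B).flatten = B.flatten.map (relabel α) := flatten_mapF _ B

lemma shiftF_flatten (n : ℕ) (B : List (List ℕ)) :
    (shiftF n B).flatten = B.flatten.map (· + n) := flatten_mapF _ B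

lemma relabelF_flatten_length {N : ℕ} (α : Perm (Fin N)) (B : List (List ℕ)) :
    (relabelF α B).flatten.length = B.flatten.length := by
  rw [relabelF_flatten, List.length_map]

lemma shiftF_flatten_length (n : ℕ) (B : List (List ℕ)) :
    (shiftF n B).flatten.length = B.flatten.length := by
  rw [shiftF_flatten, List.length_map]

lemma mergeBlocks_flatten (A B : List (List ℕ)) :
    (mergeBlocks A B).flatten = A.flatten ++ B.flatten := by
  unfold mergeBlocks
  rcases List.eq_nil_or_concat A with rfl | ⟨A', a, rfl⟩ <;> cases B <;>
    simp [List.concat_eq_append, List.dropLast_concat, List.getLastD_concat,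
      List.flatten_concat, List.append_assoc]

lemma mergeBlocks_map (f : ℕ → ℕ) (A B : List (List ℕ)) :
    (mergeBlocks A B).map (List.map f) =
      mergeBlocks (A.map (List.map f)) (B.map (List.map f)) := by
  unfold mergeBlocks
  rcases List.eq_nil_or_concat A with rfl | ⟨A', a, rfl⟩ <;> cases B <;>
    simp [List.concat_eq_append, List.dropLast_concat, List.getLastD_concat, List.map_concat]

lemma mergeBlocks_ne_nil (A B : List (List ℕ)) : mergeBlocks A B ≠ [] := by
  unfold mergeBlocks
  simp

lemma mergeBlocks_concat_cons (A' : List (List ℕ)) (a b : List ℕ) (B' : List (List ℕ)) :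
    mergeBlocks (A' ++ [a]) (b :: B') = A' ++ (a ++ b) :: B' := by
  unfold mergeBlocks
  rw [List.dropLast_concat, List.getLastD_concat]
  rfl

lemma mergeBlocks_assoc {F G H : List (List ℕ)} (hF : F ≠ []) (hG : G ≠ []) (hH : H ≠ []) :
    mergeBlocks (mergeBlocks F G) H = mergeBlocks F (mergeBlocks G H) := by
  rcases List.eq_nil_or_concat F with rfl | ⟨F', f, rfl⟩
  · exact absurd rfl hF
  rcases H with _ | ⟨h, H'⟩
  · exact absurd rfl hH
  rcases G with _ | ⟨g, G₁⟩
  · exact absurd rfl hG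
  rw [List.concat_eq_append]
  rcases List.eq_nil_or_concat G₁ with rfl | ⟨G₂, g₂, rfl⟩
  · -- G = [g]
    have e1 : mergeBlocks (F' ++ [f]) [g] = F' ++ [f ++ g] :=
      mergeBlocks_concat_cons F' f g []
    have e2 : mergeBlocks ([] ++ [g]) (h :: H') = [] ++ (g ++ h) :: H' :=
      mergeBlocks_concat_cons [] g h H'
    simp only [List.nil_append] at e2
    rw [e1, e2, mergeBlocks_concat_cons F' (f ++ g) h H',
      mergeBlocks_concat_cons F' f (g ++ h) H', List.append_assoc]
  · -- G = g :: G₂ ++ [g₂]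
    rw [List.concat_eq_append]
    have e1 : mergeBlocks (F' ++ [f]) (g :: (G₂ ++ [g₂])) = F' ++ (f ++ g) :: (G₂ ++ [g₂]) :=
      mergeBlocks_concat_cons F' f g (G₂ ++ [g₂])
    have e2 : mergeBlocks ((g :: G₂) ++ [g₂]) (h :: H') = (g :: G₂) ++ (g₂ ++ h) :: H' :=
      mergeBlocks_concat_cons (g :: G₂) g₂ h H'
    have e3 : F' ++ (f ++ g) :: (G₂ ++ [g₂]) = (F' ++ (f ++ g) :: G₂) ++ [g₂] := by
      simp [List.append_assoc]
    have e4 : (g :: G₂) ++ (g₂ ++ h) :: H' = g :: (G₂ ++ (g₂ ++ h) :: H') := by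
      simp
    rw [e1, e3, mergeBlocks_concat_cons (F' ++ (f ++ g) :: G₂) g₂ h H',
      show g :: (G₂ ++ [g₂]) = (g :: G₂) ++ [g₂] from rfl,
      e2, e4, mergeBlocks_concat_cons F' f g (G₂ ++ (g₂ ++ h) :: H')]
    simp [List.append_assoc]

lemma thetaW_thetaW (B : List (List ℕ)) : thetaW (thetaW B) = B := by
  unfold thetaW
  rw [List.map_reverse, List.reverse_reverse, List.map_map]
  simp

lemma thetaW_map (f : ℕ → ℕ) (B : List (List ℕ)) :
    thetaW (B.map (List.map f)) = (thetaW B).map (List.map f) := by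
  unfold thetaW
  rw [List.map_map, List.map_reverse, List.map_map]
  congr 1
  apply List.map_congr_left
  intro b _
  simp [List.map_reverse]

lemma thetaW_flatten (B : List (List ℕ)) :
    (thetaW B).flatten = B.flatten.reverse := by
  unfold thetaW
  rw [List.reverse_flatten]

lemma thetaW_ne_nil {B : List (List ℕ)} (hB : B ≠ []) : thetaW B ≠ [] := by
  unfold thetaW
  simpa using hB


lemma thetaW_mergeBlocks {A B : List (List ℕ)} (hA : A ≠ []) (hB : B ≠ []) :
    thetaW (mergeBlocks A B) = mergeBlocks (thetaW B) (thetaW A) := by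
  rcases List.eq_nil_or_concat A with rfl | ⟨A', a, rfl⟩
  · exact absurd rfl hA
  rcases B with _ | ⟨b, B'⟩
  · exact absurd rfl hB
  rw [List.concat_eq_append, mergeBlocks_concat_cons A' a b B']
  have e1 : thetaW (b :: B') = (B'.map List.reverse).reverse ++ [b.reverse] := by
    simp [thetaW]
  have e2 : thetaW (A' ++ [a]) = a.reverse :: (A'.map List.reverse).reverse := by
    simp [thetaW]
  rw [e1, e2, mergeBlocks_concat_cons ((B'.map List.reverse).reverse) b.reverse a.reverse
    ((A'.map List.reverse).reverse)]
  simp [thetaW, List.reverse_append]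

end words
open Equiv Finset

section algebra

lemma mulCLF_single_single (A B : List (List ℕ)) :
    mulCLF (Finsupp.single A (1 : ℂ)) (Finsupp.single B (1 : ℂ)) = shuffleMulW A B := by
  unfold mulCLF
  rw [Finsupp.sum_single_index, Finsupp.sum_single_index] <;> simp

lemma mulCLF_add_left (x x' y : CLF) :
    mulCLF (x + x') y = mulCLF x y + mulCLF x' y := by
  unfold mulCLF
  rw [Finsupp.sum_add_index']
  · intro F; simp
  · intro F a a'
    rw [← Finsupp.sum_add]
    congr 1
    funext G b
    rw [add_mul, add_smul]

lemma mulCLF_add_right (x y y' : CLF) :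
    mulCLF x (y + y') = mulCLF x y + mulCLF x y' := by
  unfold mulCLF
  rw [← Finsupp.sum_add]
  congr 1
  funext F a
  rw [Finsupp.sum_add_index']
  · intro G; simp
  · intro G b b'
    rw [mul_add, add_smul]

noncomputable def mulLeftHom (y : CLF) : CLF →+ CLF :=
  AddMonoidHom.mk' (fun x => mulCLF x y) (fun a b => mulCLF_add_left a b y)

noncomputable def mulRightHom (x : CLF) : CLF →+ CLF :=
  AddMonoidHom.mk' (fun y => mulCLF x y) (fun a b => mulCLF_add_right x a b)

lemma mulCLF_sum_left {ι : Type} (s : Finset ι) (w : ι → CLF) (y : CLF) :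
    mulCLF (∑ i ∈ s, w i) y = ∑ i ∈ s, mulCLF (w i) y :=
  map_sum (mulLeftHom y) w s

lemma mulCLF_sum_right {ι : Type} (x : CLF) (s : Finset ι) (w : ι → CLF) :
    mulCLF x (∑ i ∈ s, w i) = ∑ i ∈ s, mulCLF x (w i) :=
  map_sum (mulRightHom x) w s

lemma theta_single (B : List (List ℕ)) (c : ℂ) :
    theta (Finsupp.single B c) = Finsupp.single (thetaW B) c :=
  Finsupp.mapDomain_single

lemma theta_sum {ι : Type} (s : Finset ι) (w : ι → CLF) :
    theta (∑ i ∈ s, w i) = ∑ i ∈ s, theta (w i) :=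
  map_sum (Finsupp.mapDomain.addMonoidHom thetaW) w s

end algebra

section rot

/-- the rotation by blocks: `[0,n) ↦ [m,N)`, `[n,N) ↦ [0,m)`, each increasingly. -/
def rotPerm {n m N : ℕ} (h : n + m = N) : Perm (Fin N) where
  toFun x := if hx : (x : ℕ) < n then ⟨(x : ℕ) + m, by omega⟩ else ⟨(x : ℕ) - n, by omega⟩
  invFun x := if hx : (x : ℕ) < m then ⟨(x : ℕ) + n, by omega⟩ else ⟨(x : ℕ) - m, by omega⟩
  left_inv x := by
    by_cases hx : (x : ℕ) < n
    · simp only [hx, dif_pos]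
      have h2 : ¬ ((x : ℕ) + m < m) := by omega
      simp only [h2, dif_neg, not_false_iff]
      apply Fin.ext; simp
    · simp only [hx, dif_neg, not_false_iff]
      have h2 : (x : ℕ) - n < m := by have := x.isLt; omega
      simp only [h2, dif_pos]
      apply Fin.ext; simp; omega
  right_inv x := by
    by_cases hx : (x : ℕ) < m
    · simp only [hx, dif_pos]
      have h2 : ¬ ((x : ℕ) + n < n) := by omega
      simp only [h2, dif_neg, not_false_iff]
      apply Fin.ext; simp
    · simp only [hx, dif_neg, not_false_iff]
      have h2 : (x : ℕ) - m < n := by have := x.isLt; omega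
      simp only [h2, dif_pos]
      apply Fin.ext; simp; omega

lemma rotPerm_lt {n m N : ℕ} (h : n + m = N) (x : Fin N) (hx : (x : ℕ) < n) :
    (rotPerm h x : ℕ) = (x : ℕ) + m := by simp [rotPerm, Equiv.coe_fn_mk, hx]

lemma rotPerm_ge {n m N : ℕ} (h : n + m = N) (x : Fin N) (hx : n ≤ (x : ℕ)) :
    (rotPerm h x : ℕ) = (x : ℕ) - n := by
  have : ¬ (x : ℕ) < n := by omega
  simp [rotPerm, Equiv.coe_fn_mk, this]

lemma rotPerm_inv_lt {n m N : ℕ} (h : n + m = N) (x : Fin N) (hx : (x : ℕ) < m) :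
    ((rotPerm h)⁻¹ x : ℕ) = (x : ℕ) + n := by
  show ((rotPerm h).symm x : ℕ) = (x : ℕ) + n
  simp [rotPerm, Equiv.symm, hx]

lemma rotPerm_inv_ge {n m N : ℕ} (h : n + m = N) (x : Fin N) (hx : m ≤ (x : ℕ)) :
    ((rotPerm h)⁻¹ x : ℕ) = (x : ℕ) - m := by
  have : ¬ (x : ℕ) < m := by omega
  show ((rotPerm h).symm x : ℕ) = (x : ℕ) - m
  simp [rotPerm, Equiv.symm, this]

end rot

section letters

def LettersIn (B : List (List ℕ)) (lo hi : ℕ) : Prop :=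
  ∀ ℓ ∈ B.flatten, lo ≤ ℓ ∧ ℓ ≤ hi

lemma isLF_letters {B : List (List ℕ)} (hB : IsLF B) :
    LettersIn B 1 B.flatten.length := by
  intro ℓ hℓ
  have := hB.2.mem_iff.mp hℓ
  rw [List.mem_range'_1] at this
  omega

lemma lettersIn_mono {B : List (List ℕ)} {lo hi lo' hi' : ℕ} (h : LettersIn B lo hi)
    (h1 : lo' ≤ lo) (h2 : hi ≤ hi') : LettersIn B lo' hi' := by
  intro ℓ hℓ
  have := h ℓ hℓ
  omega

lemma lettersIn_shiftF {B : List (List ℕ)} {lo hi : ℕ} (h : LettersIn B lo hi) (k : ℕ) :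
    LettersIn (shiftF k B) (lo + k) (hi + k) := by
  intro ℓ hℓ
  rw [shiftF_flatten, List.mem_map] at hℓ
  obtain ⟨ℓ', hℓ', rfl⟩ := hℓ
  have := h ℓ' hℓ'
  omega

lemma lettersIn_mergeBlocks {A B : List (List ℕ)} {lo hi : ℕ}
    (hA : LettersIn A lo hi) (hB : LettersIn B lo hi) :
    LettersIn (mergeBlocks A B) lo hi := by
  intro ℓ hℓ
  rw [mergeBlocks_flatten, List.mem_append] at hℓ
  rcases hℓ with h | h
  · exact hA ℓ h
  · exact hB ℓ h

lemma lettersIn_thetaW {B : List (List ℕ)} {lo hi : ℕ} (h : LettersIn B lo hi) :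
    LettersIn (thetaW B) lo hi := by
  intro ℓ hℓ
  rw [thetaW_flatten, List.mem_reverse] at hℓ
  exact h ℓ hℓ

lemma shiftF_ne_nil {B : List (List ℕ)} (hB : B ≠ []) (k : ℕ) : shiftF k B ≠ [] := by
  unfold shiftF; simpa using hB

end letters
open Equiv Finset

section perletter

lemma mapF_mapF (f g : ℕ → ℕ) (B : List (List ℕ)) :
    (B.map (List.map g)).map (List.map f) = B.map (List.map (fun ℓ => f (g ℓ))) := by
  rw [List.map_map]
  apply List.map_congr_left
  intro b _
  simp [List.map_map]

lemma mapF_id {f : ℕ → ℕ} {B : List (List ℕ)} (h : ∀ ℓ ∈ B.flatten, f ℓ = ℓ) :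
    B.map (List.map f) = B := by
  rw [mapF_congr (g := id) h]
  simp

lemma relabel_blockSum_low {K p N : ℕ} (h : K + p = N) (η : Perm (Fin K))
    (τ : Perm (Fin p)) (ℓ : ℕ) (hℓ : ℓ - 1 < K) :
    relabel (blockSum h η τ) ℓ = relabel η ℓ := by
  unfold relabel
  rw [dif_pos (show ℓ - 1 < N by omega), dif_pos hℓ]
  congr 1
  exact blockSum_lt h η τ ⟨ℓ - 1, by omega⟩ hℓ

lemma relabel_blockSum_one_right_high {K p N : ℕ} (h : K + p = N) (η : Perm (Fin K))
    (ℓ : ℕ) (h1 : 1 ≤ ℓ) (hℓ : K ≤ ℓ - 1) :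
    relabel (blockSum h η (1 : Perm (Fin p))) ℓ = ℓ := by
  unfold relabel
  by_cases h2 : ℓ - 1 < N
  · rw [dif_pos h2]
    rw [show (blockSum h η (1 : Perm (Fin p))) ⟨ℓ - 1, h2⟩ = ⟨ℓ - 1, h2⟩ from
      blockSum_one_right_ge h η ⟨ℓ - 1, h2⟩ hℓ]
    simp; omega
  · rw [dif_neg h2]

lemma relabel_blockSum_one_left_low {n K N : ℕ} (h : n + K = N) (γ : Perm (Fin K))
    (ℓ : ℕ) (h1 : 1 ≤ ℓ) (hℓ : ℓ - 1 < n) :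
    relabel (blockSum h (1 : Perm (Fin n)) γ) ℓ = ℓ := by
  unfold relabel
  rw [dif_pos (show ℓ - 1 < N by omega)]
  rw [show (blockSum h (1 : Perm (Fin n)) γ) ⟨ℓ - 1, by omega⟩ = ⟨ℓ - 1, by omega⟩ from
    blockSum_one_left_lt h γ ⟨ℓ - 1, by omega⟩ hℓ]
  simp; omega

lemma relabel_blockSum_one_left_shift {n K N : ℕ} (h : n + K = N) (γ : Perm (Fin K))
    (ℓ : ℕ) (h1 : 1 ≤ ℓ) (h2 : ℓ ≤ K) :
    relabel (blockSum h (1 : Perm (Fin n)) γ) (ℓ + n) = relabel γ ℓ + n := by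
  unfold relabel
  rw [dif_pos (show ℓ + n - 1 < N by omega), dif_pos (show ℓ - 1 < K by omega)]
  have hval := blockSum_ge h (1 : Perm (Fin n)) γ ⟨ℓ + n - 1, by omega⟩ (by simp; omega)
  rw [hval]
  have : (⟨ℓ + n - 1 - n, by omega⟩ : Fin K) = ⟨ℓ - 1, by omega⟩ := by
    apply Fin.ext; simp; omega
  rw [this]
  omega

lemma relabel_rot_high {n m N : ℕ} (h : n + m = N) (ℓ : ℕ) (h1 : 1 ≤ ℓ) (h2 : ℓ ≤ m) :
    relabel (rotPerm h) (ℓ + n) = ℓ := by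
  unfold relabel
  rw [dif_pos (show ℓ + n - 1 < N by omega)]
  rw [rotPerm_ge h ⟨ℓ + n - 1, by omega⟩ (by simp; omega)]
  simp; omega

lemma relabel_rot_low {n m N : ℕ} (h : n + m = N) (ℓ : ℕ) (h1 : 1 ≤ ℓ) (h2 : ℓ ≤ n) :
    relabel (rotPerm h) ℓ = ℓ + m := by
  unfold relabel
  rw [dif_pos (show ℓ - 1 < N by omega)]
  rw [rotPerm_lt h ⟨ℓ - 1, by omega⟩ (by simp; omega)]
  simp; omega

end perletter

section wordeq

lemma relabelF_blockSum_low {K p N : ℕ} (h : K + p = N) (η : Perm (Fin K))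
    (τ : Perm (Fin p)) {B : List (List ℕ)} (hB : LettersIn B 1 K) :
    relabelF (blockSum h η τ) B = relabelF η B := by
  apply mapF_congr
  intro ℓ hℓ
  exact relabel_blockSum_low h η τ ℓ (by have := hB ℓ hℓ; omega)

lemma relabelF_blockSum_one_right_shift {K p N : ℕ} (h : K + p = N) (η : Perm (Fin K))
    {B : List (List ℕ)} (hB : LettersIn B 1 p) :
    relabelF (blockSum h η (1 : Perm (Fin p))) (shiftF K B) = shiftF K B := by
  show (B.map (List.map (· + K))).map (List.map (relabel (blockSum h η 1))) = _
  rw [mapF_mapF]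
  show B.map (List.map fun ℓ => relabel (blockSum h η 1) (ℓ + K)) = B.map (List.map (· + K))
  apply mapF_congr
  intro ℓ hℓ
  have hb := hB ℓ hℓ
  exact relabel_blockSum_one_right_high h η (ℓ + K) (by omega) (by omega)

lemma relabelF_blockSum_one_left_fix {n K N : ℕ} (h : n + K = N) (γ : Perm (Fin K))
    {B : List (List ℕ)} (hB : LettersIn B 1 n) :
    relabelF (blockSum h (1 : Perm (Fin n)) γ) B = B := by
  apply mapF_id
  intro ℓ hℓ
  have hb := hB ℓ hℓ
  exact relabel_blockSum_one_left_low h γ ℓ (by omega) (by omega)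

lemma shiftF_relabelF_comm {n K N : ℕ} (h : n + K = N) (γ : Perm (Fin K))
    {B : List (List ℕ)} (hB : LettersIn B 1 K) :
    shiftF n (relabelF γ B) = relabelF (blockSum h (1 : Perm (Fin n)) γ) (shiftF n B) := by
  show (B.map (List.map (relabel γ))).map (List.map (· + n)) =
    (B.map (List.map (· + n))).map (List.map (relabel (blockSum h 1 γ)))
  rw [mapF_mapF, mapF_mapF]
  apply mapF_congr
  intro ℓ hℓ
  have hb := hB ℓ hℓ
  exact (relabel_blockSum_one_left_shift h γ ℓ (by omega) (by omega)).symm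

lemma relabelF_rot_shift {n m N : ℕ} (h : n + m = N) {B : List (List ℕ)}
    (hB : LettersIn B 1 m) :
    relabelF (rotPerm h) (shiftF n B) = B := by
  show (B.map (List.map (· + n))).map (List.map (relabel (rotPerm h))) = B
  rw [mapF_mapF]
  apply mapF_id
  intro ℓ hℓ
  have hb := hB ℓ hℓ
  exact relabel_rot_high h ℓ (by omega) (by omega)

lemma relabelF_rot_low {n m N : ℕ} (h : n + m = N) {B : List (List ℕ)}
    (hB : LettersIn B 1 n) :
    relabelF (rotPerm h) B = shiftF m B := by
  apply mapF_congr
  intro ℓ hℓ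
  have hb := hB ℓ hℓ
  exact relabel_rot_low h ℓ (by omega) (by omega)

lemma shiftF_shiftF (k l : ℕ) (B : List (List ℕ)) :
    shiftF k (shiftF l B) = shiftF (l + k) B := by
  show (B.map (List.map (· + l))).map (List.map (· + k)) = B.map (List.map (· + (l + k)))
  rw [mapF_mapF]
  apply mapF_congr
  intro ℓ _
  omega

lemma rot_shuffle_right {n m N : ℕ} (h : n + m = N) {η : Perm (Fin N)}
    (hη : IsShuffle n η) : IsShuffle m (η * (rotPerm h)⁻¹) := by
  intro i j hij hcase
  show η ((rotPerm h)⁻¹ i) < η ((rotPerm h)⁻¹ j)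
  rcases hcase with hj | hi
  · have hi' : (i : ℕ) < m := lt_of_lt_of_le (Fin.lt_def.mp hij) (le_of_lt hj)
    have ha := rotPerm_inv_lt h i hi'
    have hb := rotPerm_inv_lt h j hj
    apply hη
    · rw [Fin.lt_def, ha, hb]
      have := Fin.lt_def.mp hij
      omega
    · right; rw [ha]; omega
  · have hj' : m ≤ (j : ℕ) := le_trans hi (le_of_lt (Fin.lt_def.mp hij))
    have ha := rotPerm_inv_ge h i hi
    have hb := rotPerm_inv_ge h j hj'
    apply hη
    · rw [Fin.lt_def, ha, hb]
      have := Fin.lt_def.mp hij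
      omega
    · left; rw [hb]
      have := j.isLt
      omega

lemma rot_shuffle_left {n m N : ℕ} (h : n + m = N) {η : Perm (Fin N)}
    (hη : IsShuffle m η) : IsShuffle n (η * rotPerm h) := by
  intro i j hij hcase
  show η (rotPerm h i) < η (rotPerm h j)
  rcases hcase with hj | hi
  · have hi' : (i : ℕ) < n := lt_of_lt_of_le (Fin.lt_def.mp hij) (le_of_lt hj)
    have ha := rotPerm_lt h i hi'
    have hb := rotPerm_lt h j hj
    apply hη
    · rw [Fin.lt_def, ha, hb]
      have := Fin.lt_def.mp hij
      omega
    · right; rw [ha]; omega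
  · have hj' : n ≤ (j : ℕ) := le_trans hi (le_of_lt (Fin.lt_def.mp hij))
    have ha := rotPerm_ge h i hi
    have hb := rotPerm_ge h j hj'
    apply hη
    · rw [Fin.lt_def, ha, hb]
      have := Fin.lt_def.mp hij
      omega
    · left; rw [hb]
      have := j.isLt
      omega

end wordeq

set_option maxHeartbeats 1600000 in
/-- the shuffle product `⧢` on `ℂLF` is associative, the horizontal mirror
map `θ` is an involution (`θ ∘ θ = id` on `ℂLF`), and `θ` is an antiautomorphism of the
shuffle algebra: `θ(f ⧢ g) = θ(g) ⧢ θ(f)` for all levelled forests `f` and `g`. -/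
theorem CLF_shuffle_algebra_involutive :
    (∀ F G H : List (List ℕ), IsLF F → IsLF G → IsLF H →
      mulCLF (mulCLF (Finsupp.single F 1) (Finsupp.single G 1)) (Finsupp.single H 1) =
        mulCLF (Finsupp.single F 1) (mulCLF (Finsupp.single G 1) (Finsupp.single H 1))) ∧
    (∀ x : CLF, theta (theta x) = x) ∧
    (∀ F G : List (List ℕ), IsLF F → IsLF G →
      theta (mulCLF (Finsupp.single F 1) (Finsupp.single G 1)) =
        mulCLF (theta (Finsupp.single G 1)) (theta (Finsupp.single F 1))) := by
  refine ⟨?_, ?_, ?_⟩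
  · -- associativity
    intro F G H hF hG hH
    have hFne := hF.1
    have hGne := hG.1
    have hHne := hH.1
    set n := F.flatten.length with hn
    set m := G.flatten.length with hm
    set p := H.flatten.length with hp
    have hFL : LettersIn F 1 n := isLF_letters hF
    have hGL : LettersIn G 1 m := isLF_letters hG
    have hHL : LettersIn H 1 p := isLF_letters hH
    set M : List (List ℕ) := mergeBlocks F (shiftF n G) with hM
    set X : List (List ℕ) := mergeBlocks G (shiftF m H) with hX
    set W : List (List ℕ) := mergeBlocks M (shiftF (n + m) H) with hW
    set W' : List (List ℕ) := mergeBlocks F (mergeBlocks (shiftF n G) (shiftF (n + m) H))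
      with hW'
    have hML : LettersIn M 1 (n + m) := by
      rw [hM]
      exact lettersIn_mergeBlocks (lettersIn_mono hFL le_rfl (by omega))
        (lettersIn_mono (lettersIn_shiftF hGL n) (by omega) (by omega))
    have hXL : LettersIn X 1 (m + p) := by
      rw [hX]
      exact lettersIn_mergeBlocks (lettersIn_mono hGL le_rfl (by omega))
        (lettersIn_mono (lettersIn_shiftF hHL m) (by omega) (by omega))
    have hMlen : M.flatten.length = n + m := by
      rw [hM, mergeBlocks_flatten, List.length_append, shiftF_flatten_length]
    have hXlen : X.flatten.length = m + p := by
      rw [hX, mergeBlocks_flatten, List.length_append, shiftF_flatten_length]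
    have step2 : ∀ η : Perm (Fin (n + m)), shuffleMulW (relabelF η M) H =
        ∑ β ∈ shuffles (n + m + p) (n + m),
          Finsupp.single (relabelF (β * blockSum rfl η (1 : Perm (Fin p))) W) (1 : ℂ) := by
      intro η
      have hlen : (relabelF η M).flatten.length = n + m := by
        rw [relabelF_flatten_length, hMlen]
      rw [show shuffleMulW (relabelF η M) H =
          ∑ β ∈ shuffles ((relabelF η M).flatten.length + H.flatten.length)
            (relabelF η M).flatten.length,
            Finsupp.single (relabelF β (mergeBlocks (relabelF η M)
              (shiftF (relabelF η M).flatten.length H))) (1 : ℂ) from rfl, hlen]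
      apply Finset.sum_congr rfl
      intro β _
      congr 1
      rw [← relabelF_relabelF β (blockSum rfl η (1 : Perm (Fin p))) W]
      congr 1
      rw [show relabelF (blockSum rfl η (1 : Perm (Fin p))) W =
          mergeBlocks (relabelF (blockSum rfl η (1 : Perm (Fin p))) M)
            (relabelF (blockSum rfl η (1 : Perm (Fin p))) (shiftF (n + m) H)) from
          mergeBlocks_map _ M (shiftF (n + m) H)]
      rw [relabelF_blockSum_low rfl η (1 : Perm (Fin p)) hML,
        relabelF_blockSum_one_right_shift rfl η hHL]
    have step2' : ∀ γ : Perm (Fin (m + p)), shuffleMulW F (relabelF γ X) =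
        ∑ δ ∈ shuffles (n + m + p) n,
          Finsupp.single (relabelF (δ * blockSum (Nat.add_assoc n m p).symm
            (1 : Perm (Fin n)) γ) W') (1 : ℂ) := by
      intro γ
      have hVlen : (relabelF γ X).flatten.length = m + p := by
        rw [relabelF_flatten_length, hXlen]
      rw [show shuffleMulW F (relabelF γ X) =
          ∑ δ ∈ shuffles (F.flatten.length + (relabelF γ X).flatten.length) F.flatten.length,
            Finsupp.single (relabelF δ (mergeBlocks F
              (shiftF F.flatten.length (relabelF γ X)))) (1 : ℂ) from rfl, hVlen]
      conv_lhs => rw [show n + (m + p) = n + m + p from (Nat.add_assoc n m p).symm]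
      apply Finset.sum_congr rfl
      intro δ _
      congr 1
      rw [← relabelF_relabelF δ (blockSum (Nat.add_assoc n m p).symm (1 : Perm (Fin n)) γ) W']
      congr 1
      rw [show relabelF (blockSum (Nat.add_assoc n m p).symm (1 : Perm (Fin n)) γ) W' =
          mergeBlocks
            (relabelF (blockSum (Nat.add_assoc n m p).symm (1 : Perm (Fin n)) γ) F)
            (relabelF (blockSum (Nat.add_assoc n m p).symm (1 : Perm (Fin n)) γ)
              (mergeBlocks (shiftF n G) (shiftF (n + m) H))) from
          mergeBlocks_map _ F (mergeBlocks (shiftF n G) (shiftF (n + m) H))]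
      rw [relabelF_blockSum_one_left_fix (Nat.add_assoc n m p).symm γ hFL]
      congr 1
      rw [shiftF_relabelF_comm (Nat.add_assoc n m p).symm γ hXL]
      congr 1
      rw [hX, show shiftF n (mergeBlocks G (shiftF m H)) =
          mergeBlocks (shiftF n G) (shiftF n (shiftF m H)) from
          mergeBlocks_map _ G (shiftF m H), shiftF_shiftF, Nat.add_comm m n]
    have hL : mulCLF (mulCLF (Finsupp.single F 1) (Finsupp.single G 1)) (Finsupp.single H 1) =
        ∑ η ∈ shuffles (n + m) n, ∑ β ∈ shuffles (n + m + p) (n + m),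
          Finsupp.single (relabelF (β * blockSum rfl η (1 : Perm (Fin p))) W) (1 : ℂ) := by
      rw [mulCLF_single_single,
        show shuffleMulW F G =
          ∑ η ∈ shuffles (n + m) n, Finsupp.single (relabelF η M) (1 : ℂ) from rfl,
        mulCLF_sum_left]
      apply Finset.sum_congr rfl
      intro η _
      rw [mulCLF_single_single, step2 η]
    have hR : mulCLF (Finsupp.single F 1) (mulCLF (Finsupp.single G 1) (Finsupp.single H 1)) =
        ∑ γ ∈ shuffles (m + p) m, ∑ δ ∈ shuffles (n + m + p) n,
          Finsupp.single (relabelF (δ * blockSum (Nat.add_assoc n m p).symm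
            (1 : Perm (Fin n)) γ) W') (1 : ℂ) := by
      rw [mulCLF_single_single,
        show shuffleMulW G H =
          ∑ γ ∈ shuffles (m + p) m, Finsupp.single (relabelF γ X) (1 : ℂ) from rfl,
        mulCLF_sum_right]
      apply Finset.sum_congr rfl
      intro γ _
      rw [mulCLF_single_single, step2' γ]
    have hWW' : W = W' := by
      rw [hW, hW', hM]
      exact mergeBlocks_assoc hFne (shiftF_ne_nil hGne n) (shiftF_ne_nil hHne (n + m))
    calc mulCLF (mulCLF (Finsupp.single F 1) (Finsupp.single G 1)) (Finsupp.single H 1)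
        = ∑ η ∈ shuffles (n + m) n, ∑ β ∈ shuffles (n + m + p) (n + m),
            Finsupp.single (relabelF (β * blockSum rfl η (1 : Perm (Fin p))) W) (1 : ℂ) := hL
      _ = ∑ α ∈ sh3 (n + m + p) n m, Finsupp.single (relabelF α W) (1 : ℂ) :=
          sumA (fun α => Finsupp.single (relabelF α W) (1 : ℂ))
      _ = ∑ α ∈ sh3 (n + m + p) n m, Finsupp.single (relabelF α W') (1 : ℂ) := by rw [hWW']
      _ = ∑ γ ∈ shuffles (m + p) m, ∑ δ ∈ shuffles (n + m + p) n,
            Finsupp.single (relabelF (δ * blockSum (Nat.add_assoc n m p).symm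
              (1 : Perm (Fin n)) γ) W') (1 : ℂ) :=
          (sumB (fun α => Finsupp.single (relabelF α W') (1 : ℂ))).symm
      _ = mulCLF (Finsupp.single F 1) (mulCLF (Finsupp.single G 1) (Finsupp.single H 1)) :=
          hR.symm
  · -- involution
    intro x
    show Finsupp.mapDomain thetaW (Finsupp.mapDomain thetaW x) = x
    rw [← Finsupp.mapDomain_comp, show thetaW ∘ thetaW = id from funext thetaW_thetaW,
      Finsupp.mapDomain_id]
  · -- antiautomorphism
    intro F G hF hG
    have hFne := hF.1
    have hGne := hG.1
    set n := F.flatten.length with hn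
    set m := G.flatten.length with hm
    have hFL : LettersIn F 1 n := isLF_letters hF
    have hGL : LettersIn G 1 m := isLF_letters hG
    set M : List (List ℕ) := mergeBlocks F (shiftF n G) with hM
    set W₁ : List (List ℕ) := mergeBlocks (shiftF n (thetaW G)) (thetaW F) with hW₁
    have hθM : thetaW M = W₁ := by
      rw [hM, thetaW_mergeBlocks hFne (shiftF_ne_nil hGne n), hW₁]
      congr 1
      exact thetaW_map _ G
    have hGt : (thetaW G).flatten.length = m := by
      rw [thetaW_flatten, List.length_reverse]
    have hFt : (thetaW F).flatten.length = n := by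
      rw [thetaW_flatten, List.length_reverse]
    have hGtL : LettersIn (thetaW G) 1 m := lettersIn_thetaW hGL
    have hFtL : LettersIn (thetaW F) 1 n := lettersIn_thetaW hFL
    have hW₂ : mergeBlocks (thetaW G) (shiftF m (thetaW F)) =
        relabelF (rotPerm (rfl : n + m = n + m)) W₁ := by
      rw [show relabelF (rotPerm (rfl : n + m = n + m)) W₁ =
          mergeBlocks (relabelF (rotPerm (rfl : n + m = n + m)) (shiftF n (thetaW G)))
            (relabelF (rotPerm (rfl : n + m = n + m)) (thetaW F)) from
          mergeBlocks_map _ (shiftF n (thetaW G)) (thetaW F)]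
      rw [relabelF_rot_shift rfl hGtL, relabelF_rot_low rfl hFtL]
    have hL : theta (mulCLF (Finsupp.single F 1) (Finsupp.single G 1)) =
        ∑ η ∈ shuffles (n + m) n, Finsupp.single (relabelF η W₁) (1 : ℂ) := by
      rw [mulCLF_single_single,
        show shuffleMulW F G =
          ∑ η ∈ shuffles (n + m) n, Finsupp.single (relabelF η M) (1 : ℂ) from rfl,
        theta_sum]
      apply Finset.sum_congr rfl
      intro η _
      rw [theta_single]
      congr 1
      rw [show thetaW (relabelF η M) = relabelF η (thetaW M) from thetaW_map _ M, hθM]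
    have hR : mulCLF (theta (Finsupp.single G 1)) (theta (Finsupp.single F 1)) =
        ∑ η' ∈ shuffles (n + m) m,
          Finsupp.single (relabelF (η' * rotPerm (rfl : n + m = n + m)) W₁) (1 : ℂ) := by
      rw [theta_single, theta_single, mulCLF_single_single,
        show shuffleMulW (thetaW G) (thetaW F) =
          ∑ η' ∈ shuffles ((thetaW G).flatten.length + (thetaW F).flatten.length)
            (thetaW G).flatten.length,
            Finsupp.single (relabelF η' (mergeBlocks (thetaW G)
              (shiftF (thetaW G).flatten.length (thetaW F)))) (1 : ℂ) from rfl,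
        hGt, hFt]
      conv_lhs => rw [Nat.add_comm m n]
      apply Finset.sum_congr rfl
      intro η' _
      congr 1
      rw [hW₂, relabelF_relabelF]
    rw [hL, hR]
    apply Finset.sum_nbij' (i := fun η => η * (rotPerm (rfl : n + m = n + m))⁻¹)
      (j := fun η' => η' * rotPerm (rfl : n + m = n + m))
    · intro η hη
      rw [mem_shuffles] at *
      exact rot_shuffle_right rfl hη
    · intro η' hη'
      rw [mem_shuffles] at *
      exact rot_shuffle_left rfl hη'
    · intro η _
      exact inv_mul_cancel_right η (rotPerm rfl)
    · intro η' _
      exact mul_inv_cancel_right η' (rotPerm rfl)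
    · intro η _
      rw [inv_mul_cancel_right]
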